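/- Define $u_1: \mathbb{R} \to \mathbb{R}$ by $u_1 = 0$ on $(-\infty,0]$, $u_1 = 6$ on $(0,1)$, $u_1(1) = 9$, $u_1 = 10$ on $(1,2)$, $u_1 = 12$ on $[2,\infty)$. Then for every $x \in (0,2)$, $u_1(x) = \tfrac{1}{2}\sup_{(x-1,x+1)} u_1 + \tfrac{1}{2}\inf_{(x-1,x+1)} u_1 + 1$, so $u_1$ is a discontinuous (not even semicontinuous) solution of the DPP with running cost $f \equiv 1$. -/

import Mathlib

/-- The function of Example 1.1 (case `f ≡ 1`): `0` on `(-∞,0]`, `6` on `(0,1)`,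
`9` at `1`, `10` on `(1,2)`, `12` on `[2,∞)`. -/
noncomputable def u₁ (x : ℝ) : ℝ :=
  if x ≤ 0 then 0
  else if x < 1 then 6
  else if x = 1 then 9
  else if x < 2 then 10
  else 12

lemma u₁_val0 {t : ℝ} (h : t ≤ 0) : u₁ t = 0 := by simp [u₁, h]
lemma u₁_val6 {t : ℝ} (h0 : 0 < t) (h1 : t < 1) : u₁ t = 6 := by
  simp [u₁, not_le.mpr h0, h1]
lemma u₁_val9 : u₁ 1 = 9 := by norm_num [u₁]
lemma u₁_val10 {t : ℝ} (h1 : 1 < t) (h2 : t < 2) : u₁ t = 10 := by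
  simp [u₁, not_le.mpr (lt_trans one_pos h1), not_lt.mpr h1.le, ne_of_gt h1, h2]
lemma u₁_val12 {t : ℝ} (h2 : 2 ≤ t) : u₁ t = 12 := by
  have h0 : ¬ t ≤ 0 := by linarith
  have h1 : ¬ t < 1 := by linarith
  have he : t ≠ 1 := by intro h; rw [h] at h2; linarith
  have h2' : ¬ t < 2 := not_lt.mpr h2
  simp [u₁, h0, h1, he, h2']

/-- `u₁` is a discontinuous (not even semicontinuous) solution of the tug-of-war
DPP with running cost `f ≡ 1`, `Y = (0,2)`, `μ = 1/2`, `ε = 1`: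
`u₁(x) = ½ sup_{(x-1,x+1)} u₁ + ½ inf_{(x-1,x+1)} u₁ + 1` for all `x ∈ (0,2)`. -/
theorem u₁_solves_dpp :
    (∀ x ∈ Set.Ioo (0 : ℝ) 2,
      u₁ x = (1 / 2) * sSup (u₁ '' Set.Ioo (x - 1) (x + 1)) +
        (1 / 2) * sInf (u₁ '' Set.Ioo (x - 1) (x + 1)) + 1) ∧
    ¬ LowerSemicontinuous u₁ ∧ ¬ UpperSemicontinuous u₁ := by
  refine ⟨?_, ?_, ?_⟩
  · rintro x ⟨hx0, hx2⟩
    rcases lt_trichotomy x 1 with hx1 | hx1 | hx1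
    · -- x ∈ (0,1): sup = 10, inf = 0, u₁ x = 6
      have hsup : IsGreatest (u₁ '' Set.Ioo (x - 1) (x + 1)) 10 := by
        constructor
        · refine ⟨(x + 2) / 2, ⟨by linarith, by linarith⟩, ?_⟩
          exact u₁_val10 (by linarith) (by linarith)
        · rintro y ⟨t, ⟨ht1, ht2⟩, rfl⟩
          have h2 : t < 2 := by linarith
          unfold u₁; split_ifs <;> norm_num
      have hinf : IsLeast (u₁ '' Set.Ioo (x - 1) (x + 1)) 0 := by
        constructor
        · refine ⟨(x - 1) / 2, ⟨by linarith, by linarith⟩, ?_⟩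
          exact u₁_val0 (by linarith)
        · rintro y ⟨t, _, rfl⟩
          unfold u₁; split_ifs <;> norm_num
      rw [hsup.csSup_eq, hinf.csInf_eq, u₁_val6 hx0 hx1]; norm_num
    · -- x = 1: sup = 10, inf = 6, u₁ x = 9
      subst hx1
      have hsup : IsGreatest (u₁ '' Set.Ioo (1 - 1 : ℝ) (1 + 1)) 10 := by
        constructor
        · exact ⟨3 / 2, ⟨by norm_num, by norm_num⟩, u₁_val10 (by norm_num) (by norm_num)⟩
        · rintro y ⟨t, ⟨ht1, ht2⟩, rfl⟩
          have h2 : t < 2 := by linarith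
          unfold u₁; split_ifs <;> norm_num
      have hinf : IsLeast (u₁ '' Set.Ioo (1 - 1 : ℝ) (1 + 1)) 6 := by
        constructor
        · exact ⟨1 / 2, ⟨by norm_num, by norm_num⟩, u₁_val6 (by norm_num) (by norm_num)⟩
        · rintro y ⟨t, ⟨ht1, ht2⟩, rfl⟩
          have h0 : (0:ℝ) < t := by linarith
          unfold u₁; split_ifs <;> [linarith; norm_num; norm_num; norm_num; norm_num]
      rw [hsup.csSup_eq, hinf.csInf_eq, u₁_val9]; norm_num
    · -- x ∈ (1,2): sup = 12, inf = 6, u₁ x = 10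
      have hsup : IsGreatest (u₁ '' Set.Ioo (x - 1) (x + 1)) 12 := by
        constructor
        · refine ⟨(x + 3) / 2, ⟨by linarith, by linarith⟩, ?_⟩
          exact u₁_val12 (by linarith)
        · rintro y ⟨t, _, rfl⟩
          unfold u₁; split_ifs <;> norm_num
      have hinf : IsLeast (u₁ '' Set.Ioo (x - 1) (x + 1)) 6 := by
        constructor
        · refine ⟨x / 2, ⟨by linarith, by linarith⟩, ?_⟩
          exact u₁_val6 (by linarith) (by linarith)
        · rintro y ⟨t, ⟨ht1, _⟩, rfl⟩
          have h0 : (0:ℝ) < t := by linarith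
          unfold u₁; split_ifs <;> [linarith; norm_num; norm_num; norm_num; norm_num]
      rw [hsup.csSup_eq, hinf.csInf_eq, u₁_val10 hx1 hx2]; norm_num
  · -- not lower semicontinuous at 1
    intro h
    have h7 : (7:ℝ) < u₁ 1 := by rw [u₁_val9]; norm_num
    have := h 1 7 h7
    rw [Metric.eventually_nhds_iff] at this
    obtain ⟨δ, hδ, hall⟩ := this
    set t : ℝ := 1 - min δ 1 / 2 with ht
    have hmin : 0 < min δ 1 := lt_min hδ one_pos
    have hmin1 : min δ 1 ≤ 1 := min_le_right _ _
    have hdist : dist t 1 < δ := by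
      rw [Real.dist_eq]
      have : |t - 1| = min δ 1 / 2 := by rw [ht]; rw [abs_of_nonpos (by linarith)]; ring
      rw [this]
      calc min δ 1 / 2 < min δ 1 := by linarith
        _ ≤ δ := min_le_left _ _
    have := hall hdist
    beta_reduce at this
    rw [u₁_val6 (t := t) (by simp only [ht]; linarith) (by simp only [ht]; linarith)] at this
    linarith
  · -- not upper semicontinuous at 1
    intro h
    have h9 : u₁ 1 < (19/2 : ℝ) := by rw [u₁_val9]; norm_num
    have := h 1 (19/2) h9
    rw [Metric.eventually_nhds_iff] at this
    obtain ⟨δ, hδ, hall⟩ := this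
    set t : ℝ := 1 + min δ 1 / 2 with ht
    have hmin : 0 < min δ 1 := lt_min hδ one_pos
    have hmin1 : min δ 1 ≤ 1 := min_le_right _ _
    have hdist : dist t 1 < δ := by
      rw [Real.dist_eq]
      have : |t - 1| = min δ 1 / 2 := by rw [ht]; rw [abs_of_nonneg (by linarith)]; ring
      rw [this]
      calc min δ 1 / 2 < min δ 1 := by linarith
        _ ≤ δ := min_le_left _ _
    have := hall hdist
    beta_reduce at this
    rw [u₁_val10 (t := t) (by simp only [ht]; linarith) (by simp only [ht]; linarith)] at this
    linarith
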